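/- Let k be a field and let f ∈ k[x_0, x_1, x_2, x_3] be homogeneous of degree d. Suppose that for each i ∈ {0,1,2,3}, f has multiplicity at least m_i at the coordinate point e_i, where m_0, m_1, m_2, m_3 are natural numbers. Let g = f(x_1x_2x_3, x_0x_2x_3, x_0x_1x_3, x_0x_1x_2) be the result of substituting for each variable x_i the product of the other three variables. Then the monomial x_0^{m_0} x_1^{m_1} x_2^{m_2} x_3^{m_3} divides g in k[x_0, x_1, x_2, x_3]. -/

import Mathlib

open MvPolynomial

/-- If `f` is homogeneous of degree `d` with multiplicity at least `m i` at the `i`-th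
coordinate point (i.e. every exponent `a` in the support of `f` satisfies `d - a i ≥ m i`),
then after the cubic Cremona substitution `x_i ↦ ∏_{j ≠ i} x_j` the result is divisible
by `x_0^{m_0} x_1^{m_1} x_2^{m_2} x_3^{m_3}`. -/
theorem cremona_substitution_divisible
    (k : Type*) [Field k] (d : ℕ) (m : Fin 4 → ℕ)
    (f : MvPolynomial (Fin 4) k) (hf : f.IsHomogeneous d)
    (hmult : ∀ i : Fin 4, ∀ a ∈ f.support, a i + m i ≤ d) :
    (∏ i : Fin 4, (X i : MvPolynomial (Fin 4) k) ^ m i) ∣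
      MvPolynomial.bind₁ (fun i : Fin 4 => ∏ j ∈ Finset.univ.erase i, X j) f := by
  classical
  conv_rhs => rw [f.as_sum]
  rw [map_sum]
  apply Finset.dvd_sum
  intro a ha
  rw [bind₁_monomial]
  apply Dvd.dvd.mul_left
  have hsupp : (∏ i ∈ a.support, (∏ j ∈ Finset.univ.erase i, (X j : MvPolynomial (Fin 4) k)) ^ a i)
      = ∏ i : Fin 4, (∏ j ∈ Finset.univ.erase i, (X j : MvPolynomial (Fin 4) k)) ^ a i := by
    apply Finset.prod_subset (Finset.subset_univ _)
    intro i _ hi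
    simp [Finsupp.notMem_support_iff.mp hi]
  rw [hsupp]
  have hdeg : ∑ i : Fin 4, a i = d := by
    have := hf (MvPolynomial.mem_support_iff.mp ha)
    simpa [Finsupp.weight_apply, Finsupp.sum_fintype] using this
  have hswap : ∀ (x y : Fin 4), x ∈ Finset.univ ∧ y ∈ Finset.univ.erase x ↔
      x ∈ Finset.univ.erase y ∧ y ∈ Finset.univ := by
    simp [Finset.mem_erase, eq_comm, ne_comm]
  calc (∏ i : Fin 4, (X i : MvPolynomial (Fin 4) k) ^ m i)
      ∣ ∏ j : Fin 4, (X j : MvPolynomial (Fin 4) k) ^ (∑ i ∈ Finset.univ.erase j, a i) := by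
        apply Finset.prod_dvd_prod_of_dvd
        intro j _
        apply pow_dvd_pow
        have h1 : a j + ∑ i ∈ Finset.univ.erase j, a i = ∑ i : Fin 4, a i :=
          Finset.add_sum_erase _ _ (Finset.mem_univ j)
        have h2 := hmult j a ha
        omega
    _ = ∏ j : Fin 4, ∏ i ∈ Finset.univ.erase j, (X j : MvPolynomial (Fin 4) k) ^ a i := by
        simp [Finset.prod_pow_eq_pow_sum]
    _ = ∏ i : Fin 4, ∏ j ∈ Finset.univ.erase i, (X j : MvPolynomial (Fin 4) k) ^ a i :=
        Finset.prod_comm' hswap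
    _ = ∏ i : Fin 4, (∏ j ∈ Finset.univ.erase i, (X j : MvPolynomial (Fin 4) k)) ^ a i := by
        simp [Finset.prod_pow]
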